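/- In a simply-laced triangle-free Coxeter system, let α be a link of rank r ≥ 2. Then for each 1 ≤ i ≤ r−1, the intersection of supp_{⟦2i⟧}([α]) and supp_{⟦2i+2⟧}([α]) has exactly one element; that is, the supports of the centers of two consecutive overlapping braid shadows of a link intersect in a single generator. -/

import Mathlib

open List

namespace BraidFormal

variable {B : Type*}

/-- A single braid move: replace a factor `s t s` with `t s t` where `m(s,t) = 3`. -/
def IsBraidMove (M : CoxeterMatrix B) (w w' : List B) : Prop :=
  ∃ (u v : List B) (s t : B), M s t = 3 ∧
    w = u ++ [s, t, s] ++ v ∧ w' = u ++ [t, s, t] ++ v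

/-- Braid equivalence: the reflexive-transitive closure of braid moves. -/
def BraidEquiv (M : CoxeterMatrix B) : List B → List B → Prop :=
  Relation.ReflTransGen (IsBraidMove M)

/-- The braid class of a word. -/
def BraidClass (M : CoxeterMatrix B) (α : List B) : Set (List B) :=
  {β | BraidEquiv M α β}

/-- `w` has a braid shadow at (0-based) positions `i, i+1, i+2`:
the letters there are `s, t, s` with `m(s,t) = 3`.
(This corresponds to the 1-based interval `⟦i+1, i+3⟧` of the paper.) -/
def HasShadowAt (M : CoxeterMatrix B) (w : List B) (i : ℕ) : Prop :=
  ∃ s t : B, M s t = 3 ∧ w[i]? = some s ∧ w[i+1]? = some t ∧ w[i+2]? = some s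

/-- The braid class of `α` has a braid shadow at position `i`. -/
def ClassHasShadowAt (M : CoxeterMatrix B) (α : List B) (i : ℕ) : Prop :=
  ∃ β ∈ BraidClass M α, HasShadowAt M β i

/-- The rank of a reduced expression: the number of braid shadows of its braid class. -/
noncomputable def rank (M : CoxeterMatrix B) (α : List B) : ℕ :=
  Set.ncard {i | ClassHasShadowAt M α i}

/-- A Coxeter matrix is simply laced if all entries are at most 3. -/
def SimplyLaced (M : CoxeterMatrix B) : Prop := ∀ s t : B, M s t ≤ 3

/-- A Coxeter matrix is triangle free if its Coxeter graph has no three-cycles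
(all of whose edges are labelled 3). -/
def TriangleFree (M : CoxeterMatrix B) : Prop :=
  ∀ s t u : B, s ≠ t → t ≠ u → s ≠ u → M s t = 3 → M t u = 3 → M s u ≠ 3

/-- The set of generators appearing in (0-based) position `k` of some word in the
braid class of `α`. -/
def classSupp (M : CoxeterMatrix B) (α : List B) (k : ℕ) : Set B :=
  {s | ∃ β ∈ BraidClass M α, β[k]? = some s}

/-- The set of generators appearing in (0-based) positions `i` through `j` of `w`. -/
def suppInterval (w : List B) (i j : ℕ) : Set B :=
  {s | ∃ k, i ≤ k ∧ k ≤ j ∧ w[k]? = some s}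

variable {W : Type*} [Group W] {M : CoxeterMatrix B}

/-- `α` is a link of rank `r`: a reduced expression of length `2r+1` whose braid class
has braid shadows exactly at the (0-based) positions `0, 2, 4, …, 2r-2`
(the 1-based intervals `⟦1,3⟧, ⟦3,5⟧, …, ⟦2r-1,2r+1⟧`). -/
def IsLink (cs : CoxeterSystem M W) (α : List B) (r : ℕ) : Prop :=
  cs.IsReduced α ∧ α.length = 2 * r + 1 ∧
    ∀ i : ℕ, ClassHasShadowAt M α i ↔ ∃ j < r, i = 2 * j

/-- A Fibonacci link: a link all of whose braid-class braid shadows are braid shadows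
of the link itself. -/
def IsFibLink (cs : CoxeterSystem M W) (φ : List B) (r : ℕ) : Prop :=
  IsLink cs φ r ∧ ∀ i : ℕ, ClassHasShadowAt M φ i → HasShadowAt M φ i

/-! helpers -/

lemma splice_getElem? (u v : List B) (a b c : B) (k : ℕ) :
    (u ++ [a,b,c] ++ v)[k]? =
      if k < u.length then u[k]?
      else if k = u.length then some a
      else if k = u.length + 1 then some b
      else if k = u.length + 2 then some c
      else v[k - (u.length+3)]? := by
  rw [List.append_assoc]
  rcases lt_or_ge k u.length with h | h
  · rw [List.getElem?_append_left h, if_pos h]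
  · rw [List.getElem?_append_right h, if_neg (by omega)]
    obtain ⟨n, rfl⟩ : ∃ n, k = u.length + n := ⟨k - u.length, by omega⟩
    match n with
    | 0 => simp
    | 1 => simp
    | 2 => simp
    | (m+3) =>
      simp only [Nat.add_left_cancel_iff]
      rw [if_neg (by omega), if_neg (by omega), if_neg (by omega)]
      have : u.length + (m + 3) - (u.length + 3) = m := by omega
      rw [this, List.getElem?_append_right (by simp)]
      simp

lemma braidMove_symm {w w' : List B} (h : IsBraidMove M w w') : IsBraidMove M w' w := by
  obtain ⟨u, v, s, t, h3, hw, hw'⟩ := h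
  exact ⟨u, v, t, s, (M.symmetric s t) ▸ h3, hw', hw⟩

lemma braidEquiv_symm {w w' : List B} (h : BraidEquiv M w w') : BraidEquiv M w' w :=
  by
  induction h with
  | refl => exact Relation.ReflTransGen.refl
  | tail _ hm ih => exact Relation.ReflTransGen.head (braidMove_symm hm) ih

lemma mem_class_self (α : List B) : α ∈ BraidClass M α := Relation.ReflTransGen.refl

lemma class_move {α β γ : List B} (hβ : β ∈ BraidClass M α) (h : IsBraidMove M β γ) :
    γ ∈ BraidClass M α := Relation.ReflTransGen.tail hβ h

lemma length_of_braidMove {w w' : List B} (h : IsBraidMove M w w') :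
    w'.length = w.length := by
  obtain ⟨u, v, s, t, _, hw, hw'⟩ := h
  simp [hw, hw']

lemma length_of_equiv {α β : List B} (h : BraidEquiv M α β) : β.length = α.length := by
  induction h with
  | refl => rfl
  | tail _ hm ih => rw [length_of_braidMove hm, ih]

lemma sts_eq_tst (cs : CoxeterSystem M W) {i j : B} (h : M i j = 3) :
    cs.simple i * cs.simple j * cs.simple i = cs.simple j * cs.simple i * cs.simple j := by
  have h1 := cs.simple_mul_simple_pow i j
  rw [h] at h1
  set a := cs.simple i
  set b := cs.simple j
  have h2 : a * a = 1 := cs.simple_mul_simple_self i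
  have h3 : b * b = 1 := cs.simple_mul_simple_self j
  have h6 : a*b*a*(b*a*b) = 1 := by
    have e : (a*b)^3 = a*b*a*(b*a*b) := by
      rw [pow_succ, pow_succ, pow_one]; simp [mul_assoc]
    rw [← e, h1]
  have hbi : (b*a*b)*(b*a*b) = 1 := by
    have e2 : (b*a*b)*(b*a*b) = b*(a*(b*b*a))*b := by simp [mul_assoc]
    rw [e2, h3, one_mul, h2, mul_one, h3]
  calc a*b*a = a*b*a*((b*a*b)*(b*a*b)) := by rw [hbi, mul_one]
    _ = (a*b*a*(b*a*b))*(b*a*b) := by simp [mul_assoc]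
    _ = b*a*b := by rw [h6, one_mul]

lemma wordProd_braidMove (cs : CoxeterSystem M W) {w w' : List B}
    (h : IsBraidMove M w w') : cs.wordProd w' = cs.wordProd w := by
  obtain ⟨u, v, s, t, h3, hw, hw'⟩ := h
  subst hw hw'
  simp only [cs.wordProd_append, cs.wordProd_cons, cs.wordProd_nil, mul_one]
  rw [show cs.simple t * (cs.simple s * cs.simple t) =
      cs.simple t * cs.simple s * cs.simple t from by rw [mul_assoc],
    ← sts_eq_tst cs h3]
  simp [mul_assoc]

lemma isReduced_of_equiv (cs : CoxeterSystem M W) {α β : List B}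
    (h : BraidEquiv M α β) (hred : cs.IsReduced α) : cs.IsReduced β := by
  induction h with
  | refl => exact hred
  | tail _ hm ih =>
    unfold CoxeterSystem.IsReduced at *
    rw [wordProd_braidMove cs hm, length_of_braidMove hm, ih]

lemma not_isReduced_double (cs : CoxeterSystem M W) (u v : List B) (x : B) :
    ¬ cs.IsReduced (u ++ [x, x] ++ v) := by
  intro hred
  unfold CoxeterSystem.IsReduced at hred
  have he : cs.wordProd (u ++ [x,x] ++ v) = cs.wordProd (u ++ v) := by
    simp only [cs.wordProd_append, cs.wordProd_cons, cs.wordProd_nil, mul_one]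
    rw [cs.simple_mul_simple_self x, mul_one]
  have hle := cs.length_wordProd_le (u ++ v)
  rw [← he, hred] at hle
  simp at hle

/-- Perform a braid move at position `p`. -/
lemma exists_move {w : List B} {p : ℕ} {x y : B} (h3 : M x y = 3)
    (hx : w[p]? = some x) (hy : w[p+1]? = some y) (hz : w[p+2]? = some x) :
    ∃ w', IsBraidMove M w w' ∧ w'[p]? = some y ∧ w'[p+1]? = some x ∧
      w'[p+2]? = some y ∧ ∀ k, k < p ∨ p + 2 < k → w'[k]? = w[k]? := by
  have hp2 : p + 2 < w.length := (List.getElem?_eq_some_iff.mp hz).1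
  have hd : w = w.take p ++ [x, y, x] ++ w.drop (p+3) := by
    have e1 : w.drop p = x :: y :: x :: w.drop (p+3) := by
      rw [← List.getElem_cons_drop (by omega : p < w.length)]
      rw [← List.getElem_cons_drop (by omega : p+1 < w.length)]
      rw [← List.getElem_cons_drop (by omega : p+2 < w.length)]
      have ex : w[p] = x := by
        have := List.getElem?_eq_getElem (l := w) (i := p) (by omega); rw [hx] at this
        exact (Option.some.inj this).symm
      have ey : w[p+1] = y := by
        have := List.getElem?_eq_getElem (l := w) (i := p+1) (by omega); rw [hy] at this
        exact (Option.some.inj this).symm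
      have ez : w[p+2] = x := by
        have := List.getElem?_eq_getElem (l := w) (i := p+2) (by omega); rw [hz] at this
        exact (Option.some.inj this).symm
      rw [ex, ey, ez]
    rw [List.append_assoc,
      show [x, y, x] ++ w.drop (p+3) = x :: y :: x :: w.drop (p+3) from rfl,
      ← e1, List.take_append_drop]
  have hlt : (w.take p).length = p := by
    rw [List.length_take]; omega
  refine ⟨w.take p ++ [y, x, y] ++ w.drop (p+3), ⟨w.take p, w.drop (p+3), x, y, h3, hd, rfl⟩,
    ?_, ?_, ?_, ?_⟩
  · rw [splice_getElem?, hlt, if_neg (by omega), if_pos rfl]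
  · rw [splice_getElem?, hlt, if_neg (by omega), if_neg (by omega), if_pos rfl]
  · rw [splice_getElem?, hlt, if_neg (by omega), if_neg (by omega), if_neg (by omega),
      if_pos rfl]
  · intro k hk
    conv_rhs => rw [hd]
    rw [splice_getElem?, splice_getElem?, hlt]
    rcases hk with hk | hk
    · rw [if_pos (by omega), if_pos (by omega)]
    · rw [if_neg (by omega), if_neg (by omega), if_neg (by omega), if_neg (by omega),
        if_neg (by omega), if_neg (by omega), if_neg (by omega), if_neg (by omega)]

/-- From braid-move data, read off positions. -/
lemma move_positions {w₁ w₂ : List B} (h : IsBraidMove M w₁ w₂) :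
    ∃ (p : ℕ) (x y : B), M x y = 3 ∧
      w₁[p]? = some x ∧ w₁[p+1]? = some y ∧ w₁[p+2]? = some x ∧
      w₂[p]? = some y ∧ w₂[p+1]? = some x ∧ w₂[p+2]? = some y ∧
      ∀ k, k < p ∨ p + 2 < k → w₂[k]? = w₁[k]? := by
  obtain ⟨u, v, x, y, h3, hb, hc⟩ := h
  subst hb hc
  refine ⟨u.length, x, y, h3, ?_, ?_, ?_, ?_, ?_, ?_, ?_⟩
  · rw [splice_getElem?, if_neg (by omega), if_pos rfl]
  · rw [splice_getElem?, if_neg (by omega), if_neg (by omega), if_pos rfl]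
  · rw [splice_getElem?, if_neg (by omega), if_neg (by omega), if_neg (by omega), if_pos rfl]
  · rw [splice_getElem?, if_neg (by omega), if_pos rfl]
  · rw [splice_getElem?, if_neg (by omega), if_neg (by omega), if_pos rfl]
  · rw [splice_getElem?, if_neg (by omega), if_neg (by omega), if_neg (by omega), if_pos rfl]
  intro k hk
  rw [splice_getElem?, splice_getElem?]
  rcases hk with hk | hk
  · rw [if_pos (by omega), if_pos (by omega)]
  · rw [if_neg (by omega), if_neg (by omega), if_neg (by omega), if_neg (by omega),
      if_neg (by omega), if_neg (by omega), if_neg (by omega), if_neg (by omega)]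


lemma invariant (cs : CoxeterSystem M W) (htf : TriangleFree M)
    {α : List B} {r : ℕ} (hlink : IsLink cs α r)
    {j : ℕ} (hj : j + 2 ≤ r)
    {β0 : List B} (hβ0 : β0 ∈ BraidClass M α)
    {s t u : B}
    (h2 : β0[2*j+1]? = some t) (h3 : β0[2*j+2]? = some s) (h4 : β0[2*j+3]? = some u)
    (hst : M s t = 3) (hs_t : s ≠ t) (ht_u : t ≠ u) (hs_u : s ≠ u) :
    ∀ β ∈ BraidClass M α,
      (β[2*j+1]? = some t ∧ β[2*j+2]? = some s ∧ β[2*j+3]? = some u) ∨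
      (β[2*j+1]? = some s ∧ β[2*j+2]? = some t ∧ β[2*j+3]? = some u) ∨
      (M s u = 3 ∧ β[2*j+1]? = some t ∧ β[2*j+2]? = some u ∧ β[2*j+3]? = some s) ∨
      (M s u ≠ 3 ∧ β[2*j+1]? = some s ∧ β[2*j+2]? = some u ∧ β[2*j+3]? = some t) := by
  intro β hβ
  have hbe : BraidEquiv M β0 β := Relation.ReflTransGen.trans (braidEquiv_symm hβ0) hβ
  clear hβ
  induction hbe with
  | refl => exact Or.inl ⟨h2, h3, h4⟩
  | @tail bb cc hab hm ih =>
    have hbclass : bb ∈ BraidClass M α := Relation.ReflTransGen.trans hβ0 hab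
    obtain ⟨p, x, y, hxy, bx, by', bz, cx, cy, cz, hout⟩ := move_positions hm
    have hshad : ClassHasShadowAt M α p := ⟨bb, hbclass, x, y, hxy, bx, by', bz⟩
    obtain ⟨j', hj', hpj⟩ := (hlink.2.2 p).mp hshad
    by_cases hcase : p + 2 < 2*j+1 ∨ 2*j+3 < p
    · have e1 : cc[2*j+1]? = bb[2*j+1]? := hout _ (by omega)
      have e2 : cc[2*j+2]? = bb[2*j+2]? := hout _ (by omega)
      have e3 : cc[2*j+3]? = bb[2*j+3]? := hout _ (by omega)
      rw [e1, e2, e3]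
      exact ih
    · have hp : p = 2*j ∨ p = 2*j+2 := by omega
      rcases hp with hp | hp
      · -- move at 2j
        rw [hp] at bx by' bz cx cy cz
        have by1 : bb[2*j+1]? = some y := by'
        have bz1 : bb[2*j+2]? = some x := bz
        have cy1 : cc[2*j+1]? = some x := cy
        have cz1 : cc[2*j+2]? = some y := cz
        have c3 : cc[2*j+3]? = bb[2*j+3]? := hout _ (by omega)
        rcases ih with ⟨i1,i2,i3⟩|⟨i1,i2,i3⟩|⟨hJ,i1,i2,i3⟩|⟨hJ,i1,i2,i3⟩
        · -- (t,s,u): y = t, x = s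
          rw [i1] at by1; rw [i2] at bz1
          have hy : y = t := (Option.some.inj by1.symm)
          have hx : x = s := (Option.some.inj bz1.symm)
          exact Or.inr (Or.inl ⟨by rw [cy1, hx], by rw [cz1, hy], by rw [c3, i3]⟩)
        · -- (s,t,u): y = s, x = t
          rw [i1] at by1; rw [i2] at bz1
          have hy : y = s := (Option.some.inj by1.symm)
          have hx : x = t := (Option.some.inj bz1.symm)
          exact Or.inl ⟨by rw [cy1, hx], by rw [cz1, hy], by rw [c3, i3]⟩
        · -- (t,u,s) with J : y = t, x = u, M u t = 3 : contradiction
          rw [i1] at by1; rw [i2] at bz1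
          have hy : y = t := (Option.some.inj by1.symm)
          have hx : x = u := (Option.some.inj bz1.symm)
          exfalso
          have hMus : M u s = 3 := by rw [M.symmetric u s]; exact hJ
          exact htf u s t (fun h => hs_u h.symm) hs_t (fun h => ht_u h.symm) hMus hst
            (by rw [← hx, ← hy]; exact hxy)
        · -- (s,u,t) with ¬J : y = s, x = u : M u s = 3 contradiction
          rw [i1] at by1; rw [i2] at bz1
          have hy : y = s := (Option.some.inj by1.symm)
          have hx : x = u := (Option.some.inj bz1.symm)
          exfalso
          apply hJ
          have : M u s = 3 := by rw [← hx, ← hy]; exact hxy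
          rw [M.symmetric s u]; exact this
      · -- move at 2j+2
        rw [hp] at bx by' bz cx cy cz
        have bx1 : bb[2*j+2]? = some x := bx
        have by1 : bb[2*j+3]? = some y := by'
        have cx1 : cc[2*j+2]? = some y := cx
        have cy1 : cc[2*j+3]? = some x := cy
        have c1 : cc[2*j+1]? = bb[2*j+1]? := hout _ (by omega)
        rcases ih with ⟨i1,i2,i3⟩|⟨i1,i2,i3⟩|⟨hJ,i1,i2,i3⟩|⟨hJ,i1,i2,i3⟩
        · -- (t,s,u): x = s, y = u; learn M s u = 3
          rw [i2] at bx1; rw [i3] at by1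
          have hx : x = s := (Option.some.inj bx1.symm)
          have hy : y = u := (Option.some.inj by1.symm)
          have hJ : M s u = 3 := by rw [← hx, ← hy]; exact hxy
          exact Or.inr (Or.inr (Or.inl ⟨hJ, by rw [c1, i1], by rw [cx1, hy],
            by rw [cy1, hx]⟩))
        · -- (s,t,u): x = t, y = u; M t u = 3
          rw [i2] at bx1; rw [i3] at by1
          have hx : x = t := (Option.some.inj bx1.symm)
          have hy : y = u := (Option.some.inj by1.symm)
          have hMtu : M t u = 3 := by rw [← hx, ← hy]; exact hxy
          by_cases hJ : M s u = 3
          · exfalso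
            exact htf t s u (fun h => hs_t h.symm) hs_u ht_u
              (by rw [M.symmetric t s]; exact hst) hJ hMtu
          · exact Or.inr (Or.inr (Or.inr ⟨hJ, by rw [c1, i1], by rw [cx1, hy],
              by rw [cy1, hx]⟩))
        · -- (t,u,s) with J : x = u, y = s
          rw [i2] at bx1; rw [i3] at by1
          have hx : x = u := (Option.some.inj bx1.symm)
          have hy : y = s := (Option.some.inj by1.symm)
          exact Or.inl ⟨by rw [c1, i1], by rw [cx1, hy], by rw [cy1, hx]⟩
        · -- (s,u,t) with ¬J : x = u, y = t
          rw [i2] at bx1; rw [i3] at by1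
          have hx : x = u := (Option.some.inj bx1.symm)
          have hy : y = t := (Option.some.inj by1.symm)
          exact Or.inr (Or.inl ⟨by rw [c1, i1], by rw [cx1, hy], by rw [cy1, hx]⟩)


/-- the supports of the centers of two consecutive overlapping braid
shadows of a link intersect in a single generator. (Here `j + 1` plays the role of
the index `i` of the paper, `1 ≤ i ≤ r - 1`; the centers are the 1-based positions
`2i` and `2i+2`, i.e. the 0-based positions `2j+1` and `2j+3`.) -/
theorem statement_2 {B W : Type*} [Group W] {M : CoxeterMatrix B}
    (cs : CoxeterSystem M W) (hsl : SimplyLaced M) (htf : TriangleFree M)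
    (α : List B) (r : ℕ) (hlink : IsLink cs α r) (hr : 2 ≤ r)
    (j : ℕ) (hj : j + 2 ≤ r) :
    (classSupp M α (2 * j + 1) ∩ classSupp M α (2 * j + 3)).ncard = 1 := by
  obtain ⟨hred, hlen, hshad⟩ := hlink
  obtain ⟨β0, hβ0, s, t, hst, e1, e2, e3⟩ := (hshad (2*j)).mpr ⟨j, by omega, rfl⟩
  have e2' : β0[2*j+1]? = some t := e2
  have e3' : β0[2*j+2]? = some s := e3
  have hlenβ0 : β0.length = 2*r+1 := by rw [length_of_equiv hβ0, hlen]
  have hb : 2*j+3 < β0.length := by omega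
  obtain ⟨u, h4⟩ : ∃ u, β0[2*j+3]? = some u := ⟨β0[2*j+3], List.getElem?_eq_getElem hb⟩
  have hs_t : s ≠ t := by
    rintro rfl
    have := M.diagonal s
    omega
  have ht_u : t ≠ u := by
    rintro rfl
    have hcs : ClassHasShadowAt M α (2*j+1) :=
      ⟨β0, hβ0, t, s, by rw [M.symmetric t s]; exact hst, e2', e3', h4⟩
    obtain ⟨j', _, hj'⟩ := (hshad _).mp hcs
    omega
  have hs_u : s ≠ u := by
    rintro rfl
    have hβ0red : cs.IsReduced β0 := isReduced_of_equiv cs hβ0 hred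
    have hd : β0 = β0.take (2*j+2) ++ [s, s] ++ β0.drop (2*j+4) := by
      have d1 : β0.drop (2*j+2) = s :: s :: β0.drop (2*j+4) := by
        rw [← List.getElem_cons_drop (by omega : 2*j+2 < β0.length),
          ← List.getElem_cons_drop (by omega : 2*j+3 < β0.length)]
        have ex : β0[2*j+2] = s := by
          have h5 := List.getElem?_eq_getElem (l := β0) (i := 2*j+2) (by omega)
          rw [e3'] at h5; exact (Option.some.inj h5).symm
        have ey : β0[2*j+3] = s := by
          have h5 := List.getElem?_eq_getElem (l := β0) (i := 2*j+3) (by omega)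
          rw [h4] at h5; exact (Option.some.inj h5).symm
        rw [ex, ey]
      rw [List.append_assoc,
        show [s, s] ++ β0.drop (2*j+4) = s :: s :: β0.drop (2*j+4) from rfl,
        ← d1, List.take_append_drop]
    exact not_isReduced_double cs _ _ s (hd ▸ hβ0red)
  have hinv := invariant cs htf ⟨hred, hlen, hshad⟩ hj hβ0 e2' e3' h4 hst hs_t ht_u hs_u
  obtain ⟨γ, hγ, x', y', hxy', g1, g2, g3⟩ := (hshad (2*j+2)).mpr ⟨j+1, by omega, by omega⟩
  have g2' : γ[2*j+3]? = some y' := g2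
  have g3' : γ[2*j+4]? = some x' := g3
  by_cases hJ : M s u = 3
  · have hset : classSupp M α (2*j+1) ∩ classSupp M α (2*j+3) = {s} := by
      ext z
      simp only [Set.mem_inter_iff, Set.mem_singleton_iff]
      constructor
      · rintro ⟨⟨β1, hβ1, f1⟩, ⟨β2, hβ2, f2⟩⟩
        have z1 : z = t ∨ z = s := by
          rcases hinv β1 hβ1 with ⟨i1,_,_⟩|⟨i1,_,_⟩|⟨_,i1,_,_⟩|⟨hJ',_,_,_⟩
          · left; rw [i1] at f1; exact (Option.some.inj f1).symm
          · right; rw [i1] at f1; exact (Option.some.inj f1).symm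
          · left; rw [i1] at f1; exact (Option.some.inj f1).symm
          · exact absurd hJ hJ'
        have z2 : z = u ∨ z = s := by
          rcases hinv β2 hβ2 with ⟨_,_,i3⟩|⟨_,_,i3⟩|⟨_,_,_,i3⟩|⟨hJ',_,_,_⟩
          · left; rw [i3] at f2; exact (Option.some.inj f2).symm
          · left; rw [i3] at f2; exact (Option.some.inj f2).symm
          · right; rw [i3] at f2; exact (Option.some.inj f2).symm
          · exact absurd hJ hJ'
        rcases z1 with h1 | h1
        · rcases z2 with h2 | h2
          · exact absurd (h1.symm.trans h2) ht_u
          · exact h2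
        · exact h1
      · intro hz
        rw [hz]
        constructor
        · obtain ⟨w', hmv, m1, m2, m3, _⟩ := exists_move hst e1 e2' e3'
          exact ⟨w', class_move hβ0 hmv, m2⟩
        · rcases hinv γ hγ with ⟨i1,i2,i3⟩|⟨i1,i2,i3⟩|⟨_,i1,i2,i3⟩|⟨hJ',_,_,_⟩
          · have hx : x' = s := by rw [i2] at g1; exact (Option.some.inj g1).symm
            obtain ⟨w', hmv, m1, m2, m3, _⟩ := exists_move hxy' g1 g2' g3'
            refine ⟨w', class_move hγ hmv, ?_⟩
            rw [hx] at m2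
            exact m2
          · exfalso
            have hx : x' = t := by rw [i2] at g1; exact (Option.some.inj g1).symm
            have hy : y' = u := by rw [i3] at g2'; exact (Option.some.inj g2').symm
            exact htf t s u (fun h => hs_t h.symm) hs_u ht_u
              (by rw [M.symmetric t s]; exact hst) hJ (by rw [← hx, ← hy]; exact hxy')
          · exact ⟨γ, hγ, i3⟩
          · exact absurd hJ hJ'
    rw [hset]; exact Set.ncard_singleton s
  · have hset : classSupp M α (2*j+1) ∩ classSupp M α (2*j+3) = {t} := by
      ext z
      simp only [Set.mem_inter_iff, Set.mem_singleton_iff]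
      constructor
      · rintro ⟨⟨β1, hβ1, f1⟩, ⟨β2, hβ2, f2⟩⟩
        have z1 : z = t ∨ z = s := by
          rcases hinv β1 hβ1 with ⟨i1,_,_⟩|⟨i1,_,_⟩|⟨hJ',_,_,_⟩|⟨_,i1,_,_⟩
          · left; rw [i1] at f1; exact (Option.some.inj f1).symm
          · right; rw [i1] at f1; exact (Option.some.inj f1).symm
          · exact absurd hJ' hJ
          · right; rw [i1] at f1; exact (Option.some.inj f1).symm
        have z2 : z = u ∨ z = t := by
          rcases hinv β2 hβ2 with ⟨_,_,i3⟩|⟨_,_,i3⟩|⟨hJ',_,_,_⟩|⟨_,_,_,i3⟩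
          · left; rw [i3] at f2; exact (Option.some.inj f2).symm
          · left; rw [i3] at f2; exact (Option.some.inj f2).symm
          · exact absurd hJ' hJ
          · right; rw [i3] at f2; exact (Option.some.inj f2).symm
        rcases z2 with h2 | h2
        · rcases z1 with h1 | h1
          · exact absurd (h1.symm.trans h2) ht_u
          · exact absurd (h1.symm.trans h2) hs_u
        · exact h2
      · intro hz
        rw [hz]
        constructor
        · exact ⟨β0, hβ0, e2'⟩
        · rcases hinv γ hγ with ⟨i1,i2,i3⟩|⟨i1,i2,i3⟩|⟨hJ',_,_,_⟩|⟨_,i1,i2,i3⟩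
          · exfalso
            have hx : x' = s := by rw [i2] at g1; exact (Option.some.inj g1).symm
            have hy : y' = u := by rw [i3] at g2'; exact (Option.some.inj g2').symm
            exact hJ (by rw [← hx, ← hy]; exact hxy')
          · have hx : x' = t := by rw [i2] at g1; exact (Option.some.inj g1).symm
            obtain ⟨w', hmv, m1, m2, m3, _⟩ := exists_move hxy' g1 g2' g3'
            refine ⟨w', class_move hγ hmv, ?_⟩
            rw [hx] at m2
            exact m2
          · exact absurd hJ' hJ
          · exact ⟨γ, hγ, i3⟩
    rw [hset]; exact Set.ncard_singleton t

end BraidFormal
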